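/- The Non-Dummy Marginal Equal Share (NDMES) rule satisfies the Online-Dummy axiom: in every prefix sub-game, any dummy player of that prefix sub-game receives zero cumulative share under NDMES. -/

import Mathlib

variable {α : Type*} [DecidableEq α]

/-- The set of players arrived up to and including step `t`, under arrival order `π`. -/
def prefixSet {n : ℕ} (π : Fin n → α) (t : Fin n) : Finset α :=
  (Finset.Iic t).image π

/-- Player `j` is a dummy player of the sub-game restricted to `S`. -/
def IsDummy (v : Finset α → ℝ) (S : Finset α) (j : α) : Prop :=
  ∀ T ⊆ S, v (insert j T) = v T

open Classical in
/-- The non-dummy players of the sub-game restricted to `S`. -/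
noncomputable def nonDummies (v : Finset α → ℝ) (S : Finset α) : Finset α :=
  S.filter (fun j => ¬ IsDummy v S j)

/-- Amount NDMES gives player `p` at step `t`: the marginal contribution of the new
arrival `π t` is split equally among the non-dummy players of the current prefix. -/
noncomputable def ndmesStep {n : ℕ} (v : Finset α → ℝ) (π : Fin n → α) (t : Fin n) (p : α) : ℝ :=
  if p ∈ nonDummies v (prefixSet π t) then
    (v (prefixSet π t) - v ((prefixSet π t).erase (π t))) /
      ((nonDummies v (prefixSet π t)).card : ℝ)
  else 0

/-- Cumulative NDMES share of player `p` after step `t`. -/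
noncomputable def ndmesCum {n : ℕ} (v : Finset α → ℝ) (π : Fin n → α) (p : α) (t : Fin n) : ℝ :=
  ∑ s ∈ Finset.Iic t, ndmesStep v π s p

/-- NDMES satisfies the Online-Dummy axiom: in every prefix sub-game, any dummy player
of that prefix sub-game has zero cumulative NDMES share. -/
theorem ndmes_online_dummy {n : ℕ} (v : Finset α → ℝ) (π : Fin n → α)
    (hinj : Function.Injective π)
    (hnorm : v ∅ = 0)
    (hmono : ∀ S T : Finset α, S ⊆ T → v S ≤ v T)
    (t : Fin n) (j : α) (hj : j ∈ prefixSet π t)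
    (hdum : IsDummy v (prefixSet π t) j) :
    ndmesCum v π j t = 0 := by
  unfold ndmesCum
  apply Finset.sum_eq_zero
  intro s hs
  have hsub : prefixSet π s ⊆ prefixSet π t := by
    apply Finset.image_subset_image
    exact Finset.Iic_subset_Iic.mpr (Finset.mem_Iic.mp hs)
  unfold ndmesStep
  rw [if_neg]
  intro hmem
  classical
  have := (Finset.mem_filter.mp hmem).2
  exact this (fun T hT => hdum T (hT.trans hsub))
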